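/- For any 2×2 density matrices ρ_{x0x1} (four qubit preparations indexed by x0x1 ∈ {0,1}²) and any two Hermitian operators M_0, M_1 on ℂ² with eigenvalues in [−1,1], the nonlinear dimension witness W, defined as the determinant of the matrix with rows indexed by y and columns by the pairs (00,01) and (10,11), with entries p(0|00,y) − p(0|01,y) and p(0|10,y) − p(0|11,y) where p(0|x0x1,y) = Tr(ρ_{x0x1}(I + M_y)/2), satisfies |W| ≤ 1. -/

import Mathlib

open Matrix ComplexOrder

/-- p(0|x0x1,y) = Tr(ρ_{x0x1} (I + M_y)/2). -/
noncomputable def prob0 (ρ : Fin 2 → Fin 2 → Matrix (Fin 2) (Fin 2) ℂ)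
    (M : Fin 2 → Matrix (Fin 2) (Fin 2) ℂ) (x0 x1 y : Fin 2) : ℝ :=
  (Matrix.trace (ρ x0 x1 * ((1/2 : ℂ) • (1 + M y)))).re

/-- The nonlinear dimension witness W of Bowles–Quintino–Brunner. -/
noncomputable def Wwitness (ρ : Fin 2 → Fin 2 → Matrix (Fin 2) (Fin 2) ℂ)
    (M : Fin 2 → Matrix (Fin 2) (Fin 2) ℂ) : ℝ :=
  (prob0 ρ M 0 0 0 - prob0 ρ M 0 1 0) * (prob0 ρ M 1 0 1 - prob0 ρ M 1 1 1) -
    (prob0 ρ M 1 0 0 - prob0 ρ M 1 1 0) * (prob0 ρ M 0 0 1 - prob0 ρ M 0 1 1)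

lemma psd_entries {A : Matrix (Fin 2) (Fin 2) ℂ} (h : A.PosSemidef) :
    0 ≤ (A 0 0).re ∧ 0 ≤ (A 1 1).re ∧ (A 0 0).im = 0 ∧ (A 1 1).im = 0 ∧
    A 1 0 = starRingEnd ℂ (A 0 1) ∧
    (A 0 1).re ^ 2 + (A 0 1).im ^ 2 ≤ (A 0 0).re * (A 1 1).re := by
  have herm := h.1
  have hc : A 1 0 = starRingEnd ℂ (A 0 1) := by
    have := congrFun (congrFun herm 1) 0
    simpa [Matrix.conjTranspose_apply] using this.symm
  have him0 : (A 0 0).im = 0 := by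
    have := congrFun (congrFun herm 0) 0
    simp [Matrix.conjTranspose_apply] at this
    have := congrArg Complex.im this
    simp at this; linarith
  have him1 : (A 1 1).im = 0 := by
    have := congrFun (congrFun herm 1) 1
    simp [Matrix.conjTranspose_apply] at this
    have := congrArg Complex.im this
    simp at this; linarith
  have h00 : 0 ≤ (A 0 0).re := by
    have := h.dotProduct_mulVec_nonneg ![1, 0]
    simp [dotProduct, Matrix.mulVec, Fin.sum_univ_two] at this
    exact_mod_cast (Complex.le_def.mp this).1
  have h11 : 0 ≤ (A 1 1).re := by
    have := h.dotProduct_mulVec_nonneg ![0, 1]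
    simp [dotProduct, Matrix.mulVec, Fin.sum_univ_two] at this
    exact_mod_cast (Complex.le_def.mp this).1
  have hdet : (A 0 1).re ^ 2 + (A 0 1).im ^ 2 ≤ (A 0 0).re * (A 1 1).re := by
    have hre : 0 ≤ (A.det).re := by
      have := (Complex.le_def.mp h.det_nonneg).1
      simpa using this
    rw [Matrix.det_fin_two, hc] at hre
    simp [Complex.sub_re, Complex.mul_re, him0, him1, Complex.conj_re, Complex.conj_im] at hre
    nlinarith [hre]
  exact ⟨h00, h11, him0, him1, hc, hdet⟩

/-- difference of two density matrices has Bloch norm ≤ 1 -/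
lemma rho_norm (a0 d0 c0r c0i a1 d1 c1r c1i : ℝ)
    (ha0 : 0 ≤ a0) (hd0 : 0 ≤ d0) (ha1 : 0 ≤ a1) (hd1 : 0 ≤ d1)
    (ht0 : a0 + d0 = 1) (ht1 : a1 + d1 = 1)
    (hdet0 : c0r ^ 2 + c0i ^ 2 ≤ a0 * d0) (hdet1 : c1r ^ 2 + c1i ^ 2 ≤ a1 * d1) :
    (a0 - a1) ^ 2 + (c0r - c1r) ^ 2 + (c0i - c1i) ^ 2 ≤ 1 := by
  have hdot : -(2 * (c0r * c1r + c0i * c1i)) ≤ a0 * a1 + d0 * d1 := by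
    nlinarith [sq_nonneg (c0r * c1i - c0i * c1r), sq_nonneg (a0 * a1 - d0 * d1),
      mul_nonneg (mul_nonneg ha0 ha1) (mul_nonneg hd0 hd1),
      mul_nonneg ha0 ha1, mul_nonneg hd0 hd1,
      sq_nonneg (a0 * a1 + d0 * d1 + 2 * (c0r * c1r + c0i * c1i)),
      mul_le_mul hdet0 hdet1 (by positivity) (mul_nonneg ha0 hd0)]
  nlinarith [hdot, hdet0, hdet1]

/-- measurement Bloch vector norm ≤ 1 -/
lemma M_norm (n1 n2 vr vi : ℝ)
    (h1 : 0 ≤ 1 - n1) (h2 : 0 ≤ 1 + n1) (h3 : 0 ≤ 1 - n2) (h4 : 0 ≤ 1 + n2)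
    (hm : vr ^ 2 + vi ^ 2 ≤ (1 - n1) * (1 - n2)) (hp : vr ^ 2 + vi ^ 2 ≤ (1 + n1) * (1 + n2)) :
    ((n1 - n2) / 2) ^ 2 + vr ^ 2 + vi ^ 2 ≤ 1 := by
  have hP : vr ^ 2 + vi ^ 2 ≤ 1 - (n1 ^ 2 + n2 ^ 2) / 2 := by
    nlinarith [sq_nonneg (n1 ^ 2 - n2 ^ 2), sq_nonneg vr, sq_nonneg vi,
      mul_le_mul hm hp (by positivity) (mul_nonneg h1 h3),
      sq_nonneg (vr ^ 2 + vi ^ 2), sq_nonneg (n1 - n2), sq_nonneg (n1 + n2)]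
  nlinarith [sq_nonneg (n1 + n2)]

lemma cs3 (P1 P2 P3 Q1 Q2 Q3 : ℝ) (hP : P1 ^ 2 + P2 ^ 2 + P3 ^ 2 ≤ 1)
    (hQ : Q1 ^ 2 + Q2 ^ 2 + Q3 ^ 2 ≤ 1) : (P1 * Q1 + P2 * Q2 + P3 * Q3) ^ 2 ≤ 1 := by
  have h5 : (P1 ^ 2 + P2 ^ 2 + P3 ^ 2) * (Q1 ^ 2 + Q2 ^ 2 + Q3 ^ 2) ≤ 1 :=
    mul_le_one₀ hP (by positivity) hQ
  nlinarith [sq_nonneg (P1 * Q2 - P2 * Q1), sq_nonneg (P1 * Q3 - P3 * Q1),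
    sq_nonneg (P2 * Q3 - P3 * Q2)]

lemma lagrange3 (a b c d e f : ℝ) (h1 : a ^ 2 + b ^ 2 + c ^ 2 ≤ 1)
    (h2 : d ^ 2 + e ^ 2 + f ^ 2 ≤ 1) :
    (b * f - c * e) ^ 2 + (c * d - a * f) ^ 2 + (a * e - b * d) ^ 2 ≤ 1 := by
  have h5 : (a ^ 2 + b ^ 2 + c ^ 2) * (d ^ 2 + e ^ 2 + f ^ 2) ≤ 1 :=
    mul_le_one₀ h1 (by positivity) h2
  nlinarith [sq_nonneg (a * d + b * e + c * f)]

/-- |det of Gram-type matrix| ≤ product of norms ≤ 1 -/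
lemma key (a b c d e f g h i j k l : ℝ)
    (h1 : a ^ 2 + b ^ 2 + c ^ 2 ≤ 1) (h2 : d ^ 2 + e ^ 2 + f ^ 2 ≤ 1)
    (h3 : g ^ 2 + h ^ 2 + i ^ 2 ≤ 1) (h4 : j ^ 2 + k ^ 2 + l ^ 2 ≤ 1) :
    |(a * g + b * h + c * i) * (d * j + e * k + f * l) -
      (d * g + e * h + f * i) * (a * j + b * k + c * l)| ≤ 1 := by
  have hCS := cs3 (b * f - c * e) (c * d - a * f) (a * e - b * d)
    (h * l - i * k) (i * j - g * l) (g * k - h * j)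
    (lagrange3 a b c d e f h1 h2) (lagrange3 g h i j k l h3 h4)
  have hW : (a * g + b * h + c * i) * (d * j + e * k + f * l) -
      (d * g + e * h + f * i) * (a * j + b * k + c * l) =
      (b * f - c * e) * (h * l - i * k) + (c * d - a * f) * (i * j - g * l) +
        (a * e - b * d) * (g * k - h * j) := by ring
  rw [hW]
  exact (sq_le_one_iff_abs_le_one _).mp hCS

lemma prob0_diff_eval (A B N : Matrix (Fin 2) (Fin 2) ℂ)
    (hA : Matrix.trace A = 1) (hB : Matrix.trace B = 1)
    (hAim0 : (A 0 0).im = 0) (hAim1 : (A 1 1).im = 0)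
    (hBim0 : (B 0 0).im = 0) (hBim1 : (B 1 1).im = 0)
    (hAc : A 1 0 = starRingEnd ℂ (A 0 1)) (hBc : B 1 0 = starRingEnd ℂ (B 0 1))
    (hNim0 : (N 0 0).im = 0) (hNim1 : (N 1 1).im = 0)
    (hNc : N 1 0 = starRingEnd ℂ (N 0 1)) :
    (Matrix.trace (A * ((1/2 : ℂ) • (1 + N)))).re -
      (Matrix.trace (B * ((1/2 : ℂ) • (1 + N)))).re =
      ((A 0 0).re - (B 0 0).re) * (((N 0 0).re - (N 1 1).re) / 2) +
        ((A 0 1).re - (B 0 1).re) * (N 0 1).re +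
        ((A 0 1).im - (B 0 1).im) * (N 0 1).im := by
  have htA : (A 0 0).re + (A 1 1).re = 1 := by
    have := congrArg Complex.re hA
    simpa [Matrix.trace_fin_two] using this
  have htB : (B 0 0).re + (B 1 1).re = 1 := by
    have := congrArg Complex.re hB
    simpa [Matrix.trace_fin_two] using this
  simp only [Matrix.trace_fin_two, Matrix.mul_apply, Fin.sum_univ_two, Matrix.smul_apply,
    Matrix.add_apply, Matrix.one_apply_eq, Matrix.one_apply_ne, hAc, hBc, hNc]
  simp [Complex.add_re, Complex.mul_re, Complex.mul_im, Complex.add_im, Complex.one_re,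
    Complex.one_im, Complex.div_re, Complex.conj_re, Complex.conj_im, hAim0, hAim1, hBim0,
    hBim1, hNim0, hNim1, Matrix.one_apply]
  linear_combination ((1 + (N 1 1).re) / 2) * htA - ((1 + (N 1 1).re) / 2) * htB

theorem nonlinear_dimension_witness_bound
    (ρ : Fin 2 → Fin 2 → Matrix (Fin 2) (Fin 2) ℂ)
    (hρpsd : ∀ x0 x1, (ρ x0 x1).PosSemidef)
    (hρtr : ∀ x0 x1, Matrix.trace (ρ x0 x1) = 1)
    (M : Fin 2 → Matrix (Fin 2) (Fin 2) ℂ)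
    (hMherm : ∀ y, (M y).IsHermitian)
    (hMub : ∀ y, ((1 : Matrix (Fin 2) (Fin 2) ℂ) - M y).PosSemidef)
    (hMlb : ∀ y, ((1 : Matrix (Fin 2) (Fin 2) ℂ) + M y).PosSemidef) :
    |Wwitness ρ M| ≤ 1 := by
  -- entry facts about the states
  have hρ := fun x0 x1 => psd_entries (hρpsd x0 x1)
  have htr : ∀ x0 x1, (ρ x0 x1 0 0).re + (ρ x0 x1 1 1).re = 1 := by
    intro x0 x1
    have := congrArg Complex.re (hρtr x0 x1)
    simpa [Matrix.trace_fin_two] using this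
  -- entry facts about the measurements
  have hMc : ∀ y, M y 1 0 = starRingEnd ℂ (M y 0 1) := by
    intro y
    have := congrFun (congrFun (hMherm y) 1) 0
    simpa [Matrix.conjTranspose_apply] using this.symm
  have hMim0 : ∀ y, (M y 0 0).im = 0 := by
    intro y
    have := congrFun (congrFun (hMherm y) 0) 0
    simp [Matrix.conjTranspose_apply] at this
    have := congrArg Complex.im this
    simp at this; linarith
  have hMim1 : ∀ y, (M y 1 1).im = 0 := by
    intro y
    have := congrFun (congrFun (hMherm y) 1) 1
    simp [Matrix.conjTranspose_apply] at this
    have := congrArg Complex.im this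
    simp at this; linarith
  -- measurement Bloch norm bounds
  have hMbnd : ∀ y, (((M y 0 0).re - (M y 1 1).re) / 2) ^ 2 + ((M y 0 1).re) ^ 2 +
      ((M y 0 1).im) ^ 2 ≤ 1 := by
    intro y
    obtain ⟨hu1, hu2, -, -, -, hudet⟩ := psd_entries (hMub y)
    obtain ⟨hl1, hl2, -, -, -, hldet⟩ := psd_entries (hMlb y)
    simp [Matrix.sub_apply, Matrix.add_apply, Matrix.one_apply, Complex.sub_re, Complex.add_re,
      Complex.sub_im, Complex.add_im, Complex.one_re, Complex.one_im] at hu1 hu2 hudet hl1 hl2 hldet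
    refine M_norm _ _ _ _ (by linarith) (by linarith) (by linarith) (by linarith) ?_ ?_
    · nlinarith [hudet]
    · nlinarith [hldet]
  -- state-difference Bloch norm bounds
  have hρbnd : ∀ j : Fin 2, ((ρ j 0 0 0).re - (ρ j 1 0 0).re) ^ 2 +
      ((ρ j 0 0 1).re - (ρ j 1 0 1).re) ^ 2 + ((ρ j 0 0 1).im - (ρ j 1 0 1).im) ^ 2 ≤ 1 := by
    intro j
    obtain ⟨ha0, hd0, -, -, -, hdet0⟩ := hρ j 0
    obtain ⟨ha1, hd1, -, -, -, hdet1⟩ := hρ j 1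
    exact rho_norm _ _ _ _ _ _ _ _ ha0 hd0 ha1 hd1 (htr j 0) (htr j 1) hdet0 hdet1
  -- evaluate the witness
  have hev : ∀ (j y : Fin 2),
      prob0 ρ M j 0 y - prob0 ρ M j 1 y =
        ((ρ j 0 0 0).re - (ρ j 1 0 0).re) * (((M y 0 0).re - (M y 1 1).re) / 2) +
          ((ρ j 0 0 1).re - (ρ j 1 0 1).re) * (M y 0 1).re +
          ((ρ j 0 0 1).im - (ρ j 1 0 1).im) * (M y 0 1).im := by
    intro j y
    obtain ⟨-, -, hi00, hi01, hc0, -⟩ := hρ j 0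
    obtain ⟨-, -, hi10, hi11, hc1, -⟩ := hρ j 1
    exact prob0_diff_eval (ρ j 0) (ρ j 1) (M y) (hρtr j 0) (hρtr j 1) hi00 hi01 hi10 hi11
      hc0 hc1 (hMim0 y) (hMim1 y) (hMc y)
  rw [Wwitness, hev 0 0, hev 0 1, hev 1 0, hev 1 1]
  exact key _ _ _ _ _ _ _ _ _ _ _ _ (hρbnd 0) (hρbnd 1) (hMbnd 0) (hMbnd 1)
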